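/- Let ω < 0, 0 < α ≤ 1 and 0 < αγ ≤ β ≤ 1. For every s ∈ ℂ not lying on the closed negative real half-axis (−∞, 0], the function F is complex-differentiable at s with derivative F′(s) = s^(−1)·(β + αγω·(s^α − ω)^(−1))·F(s); in particular s^α − ω ≠ 0 for such s. -/

import Mathlib

open Real Complex Filter Set Topology

/-- The curve parametrization Λ(θ) bounding the stability region. -/
noncomputable def Lam (α β γ ω : ℝ) (θ : ℝ) : ℂ :=
  ((|ω| ^ (β / α) * Real.sin θ ^ (β / α - γ) * Real.sin (α * π / 2) ^ γ *
      Real.sin (α * π / 2 - θ) ^ (-(β / α)) : ℝ) : ℂ) *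
    Complex.exp (Complex.I * ((γ * θ + (β - α * γ) * π / 2 : ℝ) : ℂ))

/-- The characteristic function F(s) = s^(β-αγ) (s^α - ω)^γ (principal branches). -/
noncomputable def Fc (α β γ ω : ℝ) (s : ℂ) : ℂ :=
  s ^ ((β - α * γ : ℝ) : ℂ) * (s ^ ((α : ℝ) : ℂ) - (ω : ℂ)) ^ ((γ : ℝ) : ℂ)

/-- μ(θ) = (|ω| sin θ / sin(απ/2 - θ))^(1/α). -/
noncomputable def muP (α ω : ℝ) (θ : ℝ) : ℝ :=
  (|ω| * Real.sin θ / Real.sin (α * π / 2 - θ)) ^ (1 / α)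

/-- ρ(θ) = |ω| sin(απ/2) / sin(απ/2 - θ). -/
noncomputable def rhoP (α ω : ℝ) (θ : ℝ) : ℝ :=
  |ω| * Real.sin (α * π / 2) / Real.sin (α * π / 2 - θ)

theorem F_hasDerivAt (α β γ ω : ℝ) (hω : ω < 0) (hα0 : 0 < α) (hα1 : α ≤ 1)
    (hαγ : 0 < α * γ) (hβ0 : α * γ ≤ β) (hβ1 : β ≤ 1) :
    ∀ s : ℂ, ¬(s.im = 0 ∧ s.re ≤ 0) →
      s ^ ((α : ℝ) : ℂ) - (ω : ℂ) ≠ 0 ∧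
      HasDerivAt (Fc α β γ ω)
        (s⁻¹ * (((β : ℝ) : ℂ) + ((α * γ * ω : ℝ) : ℂ) * (s ^ ((α : ℝ) : ℂ) - (ω : ℂ))⁻¹) *
          Fc α β γ ω s) s := by
  intro s hs
  have hs0 : s ≠ 0 := by rintro rfl; exact hs ⟨rfl, le_refl 0⟩
  have hslit : s ∈ Complex.slitPlane := by
    rw [Complex.mem_slitPlane_iff]
    rcases eq_or_ne s.im 0 with h | h
    · left; by_contra hre; exact hs ⟨h, not_lt.mp hre⟩
    · right; exact h
  set t := s ^ ((α : ℝ) : ℂ) with ht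
  -- components of t
  have hlog : t = Complex.exp (Complex.log s * ((α : ℝ) : ℂ)) :=
    Complex.cpow_def_of_ne_zero hs0 _
  have hre : (Complex.log s * ((α : ℝ) : ℂ)).re = α * Real.log (‖s‖) := by
    simp [Complex.mul_re, Complex.log_re]; ring
  have him : (Complex.log s * ((α : ℝ) : ℂ)).im = α * s.arg := by
    simp [Complex.mul_im, Complex.log_im]; ring
  have htim : t.im = Real.exp (α * Real.log (‖s‖)) * Real.sin (α * s.arg) := by
    rw [hlog, Complex.exp_im, hre, him]
  have htre : t.re = Real.exp (α * Real.log (‖s‖)) * Real.cos (α * s.arg) := by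
    rw [hlog, Complex.exp_re, hre, him]
  have harg : |α * s.arg| < π := by
    have h1 : |s.arg| < π := by
      rcases abs_lt.mpr ⟨Complex.neg_pi_lt_arg s, lt_of_le_of_ne (Complex.arg_le_pi s)
        ((Complex.mem_slitPlane_iff_arg.mp hslit).1)⟩ with h; exact h
    calc |α * s.arg| = α * |s.arg| := by rw [abs_mul, abs_of_pos hα0]
      _ ≤ 1 * |s.arg| := by nlinarith [abs_nonneg s.arg]
      _ < π := by simpa using h1
  have htslit : t ∈ Complex.slitPlane := by
    rw [Complex.mem_slitPlane_iff]
    rcases eq_or_ne (Real.sin (α * s.arg)) 0 with h | h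
    · left
      have h0 : α * s.arg = 0 := by
        have := Real.sin_eq_zero_iff_of_lt_of_lt (by linarith [abs_lt.mp harg] : -π < α * s.arg)
          (by linarith [abs_lt.mp harg] : α * s.arg < π)
        exact this.mp h
      rw [htre, h0]
      simpa using mul_pos (Real.exp_pos _) one_pos
    · right
      rw [htim]
      exact mul_ne_zero (Real.exp_ne_zero _) h
  have hwslit : t - (ω : ℂ) ∈ Complex.slitPlane := by
    rw [Complex.mem_slitPlane_iff] at htslit ⊢
    rcases htslit with h | h
    · left; simp only [Complex.sub_re, Complex.ofReal_re]; linarith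
    · right; simpa using h
  have hw0 : t - (ω : ℂ) ≠ 0 := Complex.slitPlane_ne_zero hwslit
  refine ⟨hw0, ?_⟩
  have h2 : HasDerivAt (fun z : ℂ => z ^ ((α : ℝ) : ℂ) - (ω : ℂ))
      (((α : ℝ) : ℂ) * s ^ (((α : ℝ) : ℂ) - 1) * 1) s :=
    (((hasDerivAt_id s).cpow_const hslit)).sub_const _
  have h3 : HasDerivAt (fun z : ℂ => (z ^ ((α : ℝ) : ℂ) - (ω : ℂ)) ^ ((γ : ℝ) : ℂ))
      (((γ : ℝ) : ℂ) * (t - (ω : ℂ)) ^ (((γ : ℝ) : ℂ) - 1)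
        * (((α : ℝ) : ℂ) * s ^ (((α : ℝ) : ℂ) - 1) * 1)) s :=
    h2.cpow_const hwslit
  have h1 : HasDerivAt (fun z : ℂ => z ^ ((β - α * γ : ℝ) : ℂ))
      (((β - α * γ : ℝ) : ℂ) * s ^ (((β - α * γ : ℝ) : ℂ) - 1) * 1) s :=
    (hasDerivAt_id s).cpow_const hslit
  have h4 : HasDerivAt (fun z : ℂ => z ^ ((β - α * γ : ℝ) : ℂ) * (z ^ ((α : ℝ) : ℂ) - (ω : ℂ)) ^ ((γ : ℝ) : ℂ)) _ s :=
    h1.mul h3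
  convert h4 using 1
  · rfl
  -- algebraic identity
  have e1 : s ^ (((β - α * γ : ℝ) : ℂ) - 1) = s ^ ((β - α * γ : ℝ) : ℂ) * s⁻¹ := by
    rw [Complex.cpow_sub _ _ hs0, Complex.cpow_one, div_eq_mul_inv]
  have e2 : (t - (ω : ℂ)) ^ (((γ : ℝ) : ℂ) - 1)
      = (t - (ω : ℂ)) ^ ((γ : ℝ) : ℂ) * (t - (ω : ℂ))⁻¹ := by
    rw [Complex.cpow_sub _ _ hw0, Complex.cpow_one, div_eq_mul_inv]
  have e3 : s ^ (((α : ℝ) : ℂ) - 1) = t * s⁻¹ := by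
    rw [Complex.cpow_sub _ _ hs0, Complex.cpow_one, div_eq_mul_inv]
  rw [Fc, e1, e2, e3, ← ht]
  push_cast
  field_simp
  ring
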